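/- Classical transversality condition with Lagrangian depending on the end-point (α → 1 limit of Theorem 2): if (x,T) extremizes J(x,T) = ∫_a^T L(t,x(t),x'(t),φ(T)) dt subject to x(a) = x_a and x(T) = φ(T), and x satisfies ∂₂L − d/dt ∂₃L = 0 on [a,T], then (φ'(T) − x'(T))·∂₃L(T,x(T),x'(T),φ(T)) + φ'(T)·∫_a^T ∂₄L(t,x(t),x'(t),φ(T)) dt + L(T,x(T),x'(T),φ(T)) = 0. -/

import Mathlib

open Set MeasureTheory intervalIntegral Topology Filter

section helpers
lemma my_leibniz (G : ℝ × ℝ → ℝ) (hG : ContDiff ℝ 1 G) (a T : ℝ) :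
    HasDerivAt (fun S => ∫ t in a..S, G (S, t))
      (G (T, T) + ∫ t in a..T, fderiv ℝ G (T, t) (1, 0)) T := by
  have hGc : Continuous G := hG.continuous
  have hGd : Differentiable ℝ G := hG.differentiable one_ne_zero
  have hcurve : ∀ t S : ℝ, HasDerivAt (fun S => G (S, t)) (fderiv ℝ G (S, t) (1, 0)) S := by
    intro t S
    exact (hGd (S, t)).hasFDerivAt.comp_hasDerivAt S
      ((hasDerivAt_id S).prodMk (hasDerivAt_const S t))
  have hF'cont : Continuous fun p : ℝ × ℝ => fderiv ℝ G p (1, 0) :=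
    (hG.continuous_fderiv one_ne_zero).clm_apply continuous_const
  -- bound on compact set
  obtain ⟨C, hC⟩ : ∃ C, ∀ p ∈ Set.Icc (T - 1) (T + 1) ×ˢ Set.uIcc a T,
      ‖fderiv ℝ G p (1, 0)‖ ≤ C := by
    obtain ⟨C, hC⟩ := ((isCompact_Icc.prod isCompact_uIcc).image hF'cont).isBounded.exists_norm_le
    exact ⟨C, fun p hp => hC _ (Set.mem_image_of_mem _ hp)⟩
  have h1 : HasDerivAt (fun S => ∫ t in a..T, G (S, t))
      (∫ t in a..T, fderiv ℝ G (T, t) (1, 0)) T := by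
    refine (intervalIntegral.hasDerivAt_integral_of_dominated_loc_of_deriv_le
      (F := fun S t => G (S, t)) (F' := fun S t => fderiv ℝ G (S, t) (1, 0))
      (bound := fun _ => C) (Metric.ball_mem_nhds T one_pos) ?_ ?_ ?_ ?_ ?_ ?_).2
    · filter_upwards with S
      exact (hGc.comp (continuous_const.prodMk continuous_id)).aestronglyMeasurable
    · exact ((hGc.comp (continuous_const.prodMk continuous_id)).intervalIntegrable a T)
    · exact (hF'cont.comp (continuous_const.prodMk continuous_id)).aestronglyMeasurable
    · filter_upwards with t ht S hS
      refine hC _ ⟨?_, Set.uIoc_subset_uIcc ht⟩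
      · have := Metric.mem_ball.mp hS
        rw [Real.dist_eq] at this
        constructor <;> nlinarith [abs_lt.mp this]
    · exact intervalIntegrable_const
    · filter_upwards with t ht S _; exact hcurve t S
  have hcont2 : ∀ S : ℝ, Continuous fun t => G (S, t) := fun S =>
    hGc.comp (continuous_const.prodMk continuous_id)
  obtain ⟨K, s, hs, hlip⟩ := (hG.contDiffAt (x := (T, T))).exists_lipschitzOnWith
  obtain ⟨ε, hε, hball⟩ := Metric.mem_nhds_iff.mp hs
  have hfix : HasDerivAt (fun S => ∫ t in T..S, G (T, t)) (G (T, T)) T := by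
    refine intervalIntegral.integral_hasDerivAt_right
      ((hcont2 T).intervalIntegrable T T) ?_ (hcont2 T).continuousAt
    exact (hcont2 T).stronglyMeasurableAtFilter _ _
  set R : ℝ → ℝ := fun S => ∫ t in T..S, (G (S, t) - G (T, t)) with hR
  have hRder : HasDerivAt R 0 T := by
    rw [hasDerivAt_iff_isLittleO]
    have hRT : R T = 0 := by simp [hR]
    simp only [hRT, sub_zero, smul_zero]
    rw [Asymptotics.isLittleO_iff]
    intro c hc
    have h1 : ∀ᶠ S in 𝓝 T, |S - T| < ε := by
      filter_upwards [Metric.ball_mem_nhds T hε] with S hS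
      rwa [Metric.mem_ball, Real.dist_eq] at hS
    have h2 : ∀ᶠ S in 𝓝 T, (K : ℝ) * |S - T| ≤ c := by
      have hpos : (0:ℝ) < c / (K + 1) := by positivity
      filter_upwards [Metric.ball_mem_nhds T hpos] with S hS
      rw [Metric.mem_ball, Real.dist_eq] at hS
      have hK : (0:ℝ) ≤ K := K.coe_nonneg
      have h' : |S - T| * ((K:ℝ) + 1) < c := (lt_div_iff₀ (by positivity)).mp hS
      nlinarith [abs_nonneg (S - T)]
    filter_upwards [h1, h2] with S hSε hSc
    have key : ∀ t ∈ Set.uIoc T S, ‖G (S, t) - G (T, t)‖ ≤ (K : ℝ) * |S - T| := by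
      intro t ht
      have htT : |t - T| ≤ |S - T| := by
        rcases Set.mem_uIoc.mp ht with h | h
        · rw [abs_of_pos (by linarith [h.1] : (0:ℝ) < t - T)]
          have : (0:ℝ) < S - T := by linarith [h.1, h.2]
          rw [abs_of_pos this]; linarith [h.2]
        · rw [abs_of_nonpos (by linarith [h.2] : t - T ≤ 0)]
          have : S - T < 0 := by linarith [h.1, h.2]
          rw [abs_of_neg this]; linarith [h.1]
      have hmem : ∀ u : ℝ, |u - T| < ε → ((u, t) : ℝ × ℝ) ∈ s := by
        intro u hu
        apply hball
        rw [Metric.mem_ball, Prod.dist_eq, Real.dist_eq, Real.dist_eq]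
        exact max_lt hu (lt_of_le_of_lt htT hSε)
      have hd := hlip.dist_le_mul (S, t) (hmem S hSε) (T, t)
        (hmem T (by simpa using hε))
      rw [Prod.dist_eq, Real.dist_eq, Real.dist_eq, Real.dist_eq, sub_self, abs_zero,
        sup_eq_left.mpr (abs_nonneg _)] at hd
      rwa [Real.norm_eq_abs]
    have hnorm := intervalIntegral.norm_integral_le_of_norm_le_const key
    calc ‖R S‖ ≤ (K : ℝ) * |S - T| * |S - T| := hnorm
      _ ≤ c * ‖S - T‖ := by
          rw [Real.norm_eq_abs]
          nlinarith [abs_nonneg (S - T)]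
  have h2 : HasDerivAt (fun S => ∫ t in T..S, G (S, t)) (G (T, T)) T := by
    have heq : (fun S => ∫ t in T..S, G (S, t))
        = fun S => (∫ t in T..S, G (T, t)) + R S := by
      funext S
      rw [hR]
      beta_reduce
      rw [← intervalIntegral.integral_add (g := fun t => G (S, t) - G (T, t))
        ((hcont2 T).intervalIntegrable T S)
        (((hcont2 S).sub (hcont2 T)).intervalIntegrable T S)]
      congr 1; funext t; ring
    rw [heq]
    have := hfix.add hRder
    rw [add_zero] at this
    exact this
  have heq : (fun S => ∫ t in a..S, G (S, t))
      = fun S => (∫ t in a..T, G (S, t)) + ∫ t in T..S, G (S, t) := by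
    funext S
    rw [intervalIntegral.integral_add_adjacent_intervals ((hcont2 S).intervalIntegrable a T)
      ((hcont2 S).intervalIntegrable T S)]
  rw [heq]
  have := h1.add h2
  rw [add_comm (G (T, T))]
  exact this
lemma curve_hasDerivAt {α β γ δ : ℝ → ℝ} {a a' b' c' d' : ℝ}
    (ha : HasDerivAt α a' a) (hb : HasDerivAt β b' a) (hc : HasDerivAt γ c' a)
    (hd : HasDerivAt δ d' a) :
    HasDerivAt (fun s => ((α s, β s, γ s, δ s) : ℝ × ℝ × ℝ × ℝ)) (a', b', c', d') a :=
  ha.prodMk (hb.prodMk (hc.prodMk hd))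

lemma section2_hasDerivAt (f : ℝ × ℝ × ℝ × ℝ → ℝ) {q : ℝ × ℝ × ℝ × ℝ}
    (hf : DifferentiableAt ℝ f q) :
    HasDerivAt (fun y => f (q.1, y, q.2.2.1, q.2.2.2)) (fderiv ℝ f q (0, 1, 0, 0)) q.2.1 := by
  have h := hf.hasFDerivAt.comp_hasDerivAt q.2.1
    (curve_hasDerivAt (hasDerivAt_const _ _) (hasDerivAt_id _)
      (hasDerivAt_const _ _) (hasDerivAt_const _ _) (α := fun _ => q.1) (β := id)
      (γ := fun _ => q.2.2.1) (δ := fun _ => q.2.2.2))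
  exact h

lemma section3_hasDerivAt (f : ℝ × ℝ × ℝ × ℝ → ℝ) {q : ℝ × ℝ × ℝ × ℝ}
    (hf : DifferentiableAt ℝ f q) :
    HasDerivAt (fun v => f (q.1, q.2.1, v, q.2.2.2)) (fderiv ℝ f q (0, 0, 1, 0)) q.2.2.1 := by
  have h := hf.hasFDerivAt.comp_hasDerivAt q.2.2.1
    (curve_hasDerivAt (hasDerivAt_const _ _) (hasDerivAt_const _ _)
      (hasDerivAt_id _) (hasDerivAt_const _ _) (α := fun _ => q.1) (β := fun _ => q.2.1)
      (γ := id) (δ := fun _ => q.2.2.2))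
  exact h

lemma section4_hasDerivAt (f : ℝ × ℝ × ℝ × ℝ → ℝ) {q : ℝ × ℝ × ℝ × ℝ}
    (hf : DifferentiableAt ℝ f q) :
    HasDerivAt (fun w => f (q.1, q.2.1, q.2.2.1, w)) (fderiv ℝ f q (0, 0, 0, 1)) q.2.2.2 := by
  have h := hf.hasFDerivAt.comp_hasDerivAt q.2.2.2
    (curve_hasDerivAt (hasDerivAt_const _ _) (hasDerivAt_const _ _)
      (hasDerivAt_const _ _) (hasDerivAt_id _) (α := fun _ => q.1) (β := fun _ => q.2.1)
      (γ := fun _ => q.2.2.1) (δ := id))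
  exact h

lemma fderiv_apply_decomp (D : (ℝ × ℝ × ℝ × ℝ) →L[ℝ] ℝ) (v : ℝ × ℝ × ℝ × ℝ) :
    D v = v.1 * D (1, 0, 0, 0) + v.2.1 * D (0, 1, 0, 0) + v.2.2.1 * D (0, 0, 1, 0)
      + v.2.2.2 * D (0, 0, 0, 1) := by
  obtain ⟨v1, v2, v3, v4⟩ := v
  have hv : ((v1, v2, v3, v4) : ℝ × ℝ × ℝ × ℝ)
      = v1 • ((1:ℝ), (0:ℝ), (0:ℝ), (0:ℝ)) + v2 • ((0:ℝ), (1:ℝ), (0:ℝ), (0:ℝ))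
      + v3 • ((0:ℝ), (0:ℝ), (1:ℝ), (0:ℝ)) + v4 • ((0:ℝ), (0:ℝ), (0:ℝ), (1:ℝ)) := by
    simp [Prod.ext_iff]
  conv_lhs => rw [hv]
  rw [map_add, map_add, map_add, _root_.map_smul (f := D), _root_.map_smul (f := D), _root_.map_smul (f := D), _root_.map_smul (f := D)]
  simp [smul_eq_mul]
end helpers

/-- Classical transversality condition with Lagrangian depending on the end-point
(`α → 1` limit of Theorem 2): if `(x,T)` extremizes
`J(y,S) = ∫_a^S L(t, y(t), y'(t), φ(S)) dt` subject to `y(a) = x_a` and `y(S) = φ(S)`,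
and `x` satisfies the Euler–Lagrange equation `∂₂L − d/dt ∂₃L = 0` on `[a,T]`, then
`(φ'(T) − x'(T))·∂₃L + φ'(T)·∫_a^T ∂₄L dt + L(T,x(T),x'(T),φ(T)) = 0`. -/
theorem classical_transversality_endpoint_lagrangian
    (a b x_a T : ℝ) (L : ℝ → ℝ → ℝ → ℝ → ℝ) (φ x : ℝ → ℝ)
    (hab : a < b) (hT : T ∈ Set.Ioo a b)
    (hL : ContDiff ℝ 2 fun p : ℝ × ℝ × ℝ × ℝ => L p.1 p.2.1 p.2.2.1 p.2.2.2)
    (hφ : ContDiff ℝ 1 φ)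
    (hx : ContDiff ℝ 2 x) (hxa : x a = x_a) (hxT : x T = φ T)
    (J : (ℝ → ℝ) → ℝ → ℝ)
    (hJ : ∀ y S, J y S = ∫ t in a..S, L t (y t) (deriv y t) (φ S))
    -- local extremality among admissible pairs (with terminal point on the curve φ)
    (hext : ∃ δ > 0,
      (∀ (y : ℝ → ℝ) (S : ℝ), ContDiff ℝ 1 y → y a = x_a → y S = φ S →
        S ∈ Set.Icc a b →
        (∀ s ∈ Set.Icc a b, |y s - x s| + |deriv y s - deriv x s| < δ) →
        |S - T| < δ → J x T ≤ J y S) ∨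
      (∀ (y : ℝ → ℝ) (S : ℝ), ContDiff ℝ 1 y → y a = x_a → y S = φ S →
        S ∈ Set.Icc a b →
        (∀ s ∈ Set.Icc a b, |y s - x s| + |deriv y s - deriv x s| < δ) →
        |S - T| < δ → J y S ≤ J x T))
    -- Euler–Lagrange equation on [a,T]
    (hEL : ∀ t ∈ Set.Icc a T,
      deriv (fun y => L t y (deriv x t) (φ T)) (x t)
        - deriv (fun s => deriv (fun v => L s (x s) v (φ T)) (deriv x s)) t = 0) :
    (deriv φ T - deriv x T) * deriv (fun v => L T (x T) v (φ T)) (deriv x T)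
      + deriv φ T * (∫ t in a..T, deriv (fun w => L t (x t) (deriv x t) w) (φ T))
      + L T (x T) (deriv x T) (φ T) = 0 := by
  obtain ⟨haT, hTb⟩ := hT
  have hLu1 : ContDiff ℝ 1 fun p : ℝ × ℝ × ℝ × ℝ => L p.1 p.2.1 p.2.2.1 p.2.2.2 :=
    hL.of_le one_le_two
  have hLud : Differentiable ℝ fun p : ℝ × ℝ × ℝ × ℝ => L p.1 p.2.1 p.2.2.1 p.2.2.2 :=
    hLu1.differentiable one_ne_zero
  set Lu : ℝ × ℝ × ℝ × ℝ → ℝ := fun p => L p.1 p.2.1 p.2.2.1 p.2.2.2 with hLudef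
  set T' : ℝ := (a + T) / 2 with hT'def
  have haT' : a < T' := by rw [hT'def]; linarith
  have hT'T : T' < T := by rw [hT'def]; linarith
  set ψ : ℝ → ℝ := fun t => Real.smoothTransition ((t - a) / (T' - a)) with hψdef
  have hψtop : ContDiff ℝ (⊤ : ℕ∞) ψ :=
    Real.smoothTransition.contDiff.comp ((contDiff_id.sub contDiff_const).div_const _)
  have hψ1 : ContDiff ℝ 1 ψ := hψtop.of_le (by exact_mod_cast le_top)
  have hψd : Differentiable ℝ ψ := hψ1.differentiable one_ne_zero
  have hψ'c : Continuous (deriv ψ) := hψ1.continuous_deriv le_rfl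
  have hψa : ψ a = 0 := by
    rw [hψdef]; exact Real.smoothTransition.zero_of_nonpos (by simp)
  have hψone : ∀ t, T' ≤ t → ψ t = 1 := by
    intro t ht
    rw [hψdef]
    exact Real.smoothTransition.one_of_one_le
      ((le_div_iff₀ (by linarith)).mpr (by linarith))
  have hψabs : ∀ t, |ψ t| ≤ 1 := fun t => abs_le.mpr
    ⟨by linarith [Real.smoothTransition.nonneg ((t - a) / (T' - a))],
     Real.smoothTransition.le_one _⟩
  set c : ℝ → ℝ := fun S => φ S - x S with hcdef
  have hφd : Differentiable ℝ φ := hφ.differentiable one_ne_zero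
  have hxd : Differentiable ℝ x := hx.differentiable (by norm_num)
  have hx1 : ContDiff ℝ 1 x := hx.of_le (by norm_num)
  have hx'1 : ContDiff ℝ 1 (deriv x) := by
    have h : ContDiff ℝ (1 + 1) x := by norm_num; exact hx
    exact (contDiff_succ_iff_deriv.mp h).2.2
  have hx'd : Differentiable ℝ (deriv x) := hx'1.differentiable one_ne_zero
  have hcd1 : ContDiff ℝ 1 c := hφ.sub hx1
  have hcT : c T = 0 := by rw [hcdef]; simp [hxT]
  set κ : ℝ := deriv φ T - deriv x T with hκdef
  have hcder : HasDerivAt c κ T := (hφd T).hasDerivAt.sub (hxd T).hasDerivAt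
  set G : ℝ × ℝ → ℝ := fun p =>
    Lu (p.2, x p.2 + c p.1 * ψ p.2, deriv x p.2 + c p.1 * deriv ψ p.2, φ p.1) with hGdef
  have hψ'1 : ContDiff ℝ 1 (deriv ψ) := by
    have := contDiff_infty_iff_deriv.mp (hψtop.of_le (by exact_mod_cast le_top))
    exact this.2.of_le (by exact_mod_cast le_top)
  have hG : ContDiff ℝ 1 G := by
    apply hLu1.comp
    exact contDiff_snd.prodMk
      (((hx1.comp contDiff_snd).add ((hcd1.comp contDiff_fst).mul (hψ1.comp contDiff_snd))).prodMk
        (((hx'1.comp contDiff_snd).add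
          ((hcd1.comp contDiff_fst).mul (hψ'1.comp contDiff_snd))).prodMk
          (hφ.comp contDiff_fst)))
  -- the varied family and its derivative
  have hYd : ∀ S t, HasDerivAt (fun t => x t + c S * ψ t) (deriv x t + c S * deriv ψ t) t :=
    fun S t => (hxd t).hasDerivAt.add ((hψd t).hasDerivAt.const_mul (c S))
  have hYderiv : ∀ S, deriv (fun t => x t + c S * ψ t)
      = fun t => deriv x t + c S * deriv ψ t := fun S => funext fun t => (hYd S t).deriv
  set g : ℝ → ℝ := fun S => ∫ t in a..S, G (S, t) with hgdef
  have hgder : HasDerivAt g (G (T, T) + ∫ t in a..T, fderiv ℝ G (T, t) (1, 0)) T :=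
    my_leibniz G hG a T
  have hGT : ∀ t, G (T, t) = L t (x t) (deriv x t) (φ T) := by
    intro t; rw [hGdef]; simp [hcT, hLudef]
  have hgT : g T = J x T := by
    rw [hJ, hgdef]
    exact intervalIntegral.integral_congr fun t _ => hGT t
  have hgJ : ∀ S, g S = J (fun t => x t + c S * ψ t) S := by
    intro S
    rw [hJ, hgdef, hYderiv S]
  obtain ⟨M, hM⟩ : ∃ M, ∀ s ∈ Icc a b, |deriv ψ s| ≤ M := by
    obtain ⟨M, hM'⟩ := ((isCompact_Icc.image hψ'c)).isBounded.exists_norm_le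
    exact ⟨M, fun s hs => by
      have := hM' _ (Set.mem_image_of_mem _ hs); rwa [Real.norm_eq_abs] at this⟩
  have hM0 : 0 ≤ M := le_trans (abs_nonneg _) (hM a ⟨le_rfl, hab.le⟩)
  have hccont : Continuous c := hcd1.continuous
  have hctend : Tendsto (fun S => |c S|) (𝓝 T) (𝓝 0) := by
    have := (hccont.tendsto T).abs
    rwa [hcT, abs_zero] at this
  obtain ⟨δ, hδ, hcases⟩ := hext
  have hev1 : ∀ᶠ S in 𝓝 T, S ∈ Ioo T' b := isOpen_Ioo.eventually_mem ⟨hT'T, hTb⟩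
  have hev2 : ∀ᶠ S in 𝓝 T, |S - T| < δ := by
    filter_upwards [Metric.ball_mem_nhds T hδ] with S hS
    rwa [Metric.mem_ball, Real.dist_eq] at hS
  have hev3 : ∀ᶠ S in 𝓝 T, |c S| * (1 + M) < δ := by
    have h := hctend.eventually (gt_mem_nhds (show (0:ℝ) < δ / (1 + M) by positivity))
    filter_upwards [h] with S hS
    calc |c S| * (1 + M) < δ / (1 + M) * (1 + M) :=
          mul_lt_mul_of_pos_right hS (by linarith)
      _ = δ := by field_simp
  have hadm : ∀ᶠ S in 𝓝 T,
      ContDiff ℝ 1 (fun t => x t + c S * ψ t) ∧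
      x a + c S * ψ a = x_a ∧
      x S + c S * ψ S = φ S ∧
      S ∈ Set.Icc a b ∧
      (∀ s ∈ Set.Icc a b, |x s + c S * ψ s - x s|
        + |deriv (fun t => x t + c S * ψ t) s - deriv x s| < δ) ∧
      |S - T| < δ := by
    filter_upwards [hev1, hev2, hev3] with S h1 h2 h3
    refine ⟨hx1.add (contDiff_const.mul hψ1), ?_, ?_,
      ⟨le_of_lt (lt_trans haT' h1.1), h1.2.le⟩, ?_, h2⟩
    · rw [hψa]; simpa using hxa
    · rw [hψone S h1.1.le, hcdef]; ring
    · intro s hs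
      rw [hYderiv S]
      have h4 : |c S * ψ s| ≤ |c S| * 1 := by
        rw [abs_mul]; exact mul_le_mul_of_nonneg_left (hψabs s) (abs_nonneg _)
      have h5 : |c S * deriv ψ s| ≤ |c S| * M := by
        rw [abs_mul]; exact mul_le_mul_of_nonneg_left (hM s hs) (abs_nonneg _)
      simp only [add_sub_cancel_left]
      nlinarith [abs_nonneg (c S)]
  have hD0 : G (T, T) + (∫ t in a..T, fderiv ℝ G (T, t) (1, 0)) = 0 := by
    rcases hcases with hmin | hmax
    · have hloc : IsLocalMin g T := by
        filter_upwards [hadm] with S hS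
        obtain ⟨hS1, hS2, hS3, hS4, hS5, hS6⟩ := hS
        rw [hgT, hgJ S]
        exact hmin _ S hS1 hS2 hS3 hS4 hS5 hS6
      exact hloc.hasDerivAt_eq_zero hgder
    · have hloc : IsLocalMax g T := by
        filter_upwards [hadm] with S hS
        obtain ⟨hS1, hS2, hS3, hS4, hS5, hS6⟩ := hS
        rw [hgT, hgJ S]
        exact hmax _ S hS1 hS2 hS3 hS4 hS5 hS6
      exact hloc.hasDerivAt_eq_zero hgder
  -- pointwise formula for the S-derivative of the integrand
  have hq : ∀ t, fderiv ℝ G (T, t) (1, 0)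
      = (κ * ψ t) * fderiv ℝ Lu (t, x t, deriv x t, φ T) (0, 1, 0, 0)
        + (κ * deriv ψ t) * fderiv ℝ Lu (t, x t, deriv x t, φ T) (0, 0, 1, 0)
        + deriv φ T * fderiv ℝ Lu (t, x t, deriv x t, φ T) (0, 0, 0, 1) := by
    intro t
    have hA : HasDerivAt (fun S => G (S, t)) (fderiv ℝ G (T, t) (1, 0)) T := by
      exact (hG.differentiable one_ne_zero (T, t)).hasFDerivAt.comp_hasDerivAt T
        ((hasDerivAt_id T).prodMk (hasDerivAt_const T t))
    have hcurve : HasDerivAt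
        (fun S => ((t, x t + c S * ψ t, deriv x t + c S * deriv ψ t, φ S) : ℝ × ℝ × ℝ × ℝ))
        (0, κ * ψ t, κ * deriv ψ t, deriv φ T) T := by
      have h2 : HasDerivAt (fun S => x t + c S * ψ t) (κ * ψ t) T := by
        simpa using (hcder.mul_const (ψ t)).const_add (x t)
      have h3 : HasDerivAt (fun S => deriv x t + c S * deriv ψ t) (κ * deriv ψ t) T := by
        simpa using (hcder.mul_const (deriv ψ t)).const_add (deriv x t)
      exact curve_hasDerivAt (hasDerivAt_const _ _) h2 h3 (hφd T).hasDerivAt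
    have hB0 : HasDerivAt (fun S => G (S, t))
        (fderiv ℝ Lu (t, x t + c T * ψ t, deriv x t + c T * deriv ψ t, φ T)
          (0, κ * ψ t, κ * deriv ψ t, deriv φ T)) T := by
      have h := (hLud (t, x t + c T * ψ t, deriv x t + c T * deriv ψ t, φ T)).hasFDerivAt.comp_hasDerivAt T hcurve
      exact h
    have hpt : ((t, x t + c T * ψ t, deriv x t + c T * deriv ψ t, φ T) : ℝ × ℝ × ℝ × ℝ)
        = (t, x t, deriv x t, φ T) := by rw [hcT]; simp
    rw [hpt] at hB0
    rw [hA.unique hB0, fderiv_apply_decomp]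
    simp
  -- continuity facts
  have hfLuc : Continuous fun p : ℝ × ℝ × ℝ × ℝ => fderiv ℝ Lu p :=
    hL.continuous_fderiv two_ne_zero
  have hqc : Continuous fun t => ((t, x t, deriv x t, φ T) : ℝ × ℝ × ℝ × ℝ) :=
    continuous_id.prodMk ((hx1.continuous).prodMk ((hx'1.continuous).prodMk continuous_const))
  have hcont2 : ∀ v : ℝ × ℝ × ℝ × ℝ,
      Continuous fun t => fderiv ℝ Lu (t, x t, deriv x t, φ T) v :=
    fun v => (hfLuc.comp hqc).clm_apply continuous_const
  -- the momentum function
  have hpd : ∀ s, deriv (fun v => L s (x s) v (φ T)) (deriv x s)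
      = fderiv ℝ Lu (s, x s, deriv x s, φ T) (0, 0, 1, 0) := fun s =>
    (section3_hasDerivAt Lu (q := (s, x s, deriv x s, φ T)) (hLud _)).deriv
  have hp2 : ∀ s, deriv (fun y => L s y (deriv x s) (φ T)) (x s)
      = fderiv ℝ Lu (s, x s, deriv x s, φ T) (0, 1, 0, 0) := fun s =>
    (section2_hasDerivAt Lu (q := (s, x s, deriv x s, φ T)) (hLud _)).deriv
  have hp4 : ∀ s, deriv (fun w => L s (x s) (deriv x s) w) (φ T)
      = fderiv ℝ Lu (s, x s, deriv x s, φ T) (0, 0, 0, 1) := fun s =>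
    (section4_hasDerivAt Lu (q := (s, x s, deriv x s, φ T)) (hLud _)).deriv
  set P : ℝ → ℝ := fun s => fderiv ℝ Lu (s, x s, deriv x s, φ T) (0, 0, 1, 0) with hPdef
  have hq1 : ContDiff ℝ 1 fun t => ((t, x t, deriv x t, φ T) : ℝ × ℝ × ℝ × ℝ) :=
    contDiff_id.prodMk (hx1.prodMk (hx'1.prodMk contDiff_const))
  have hP1 : ContDiff ℝ 1 P :=
    ((hL.fderiv_right (by norm_num)).comp hq1).clm_apply contDiff_const
  have hELP : ∀ t ∈ Set.Icc a T,
      deriv P t = fderiv ℝ Lu (t, x t, deriv x t, φ T) (0, 1, 0, 0) := by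
    intro t ht
    have h := hEL t ht
    have hfun : (fun s => deriv (fun v => L s (x s) v (φ T)) (deriv x s)) = P := by
      funext s; rw [hpd s, hPdef]
    rw [hfun] at h
    rw [← hp2 t]
    linarith
  have hPdiff : Differentiable ℝ P := hP1.differentiable one_ne_zero
  have hPψder : ∀ s, HasDerivAt (fun u => P u * ψ u) (deriv P s * ψ s + P s * deriv ψ s) s :=
    fun s => (hPdiff s).hasDerivAt.mul (hψd s).hasDerivAt
  have hderPψ : deriv (fun u => P u * ψ u) = fun s => deriv P s * ψ s + P s * deriv ψ s :=
    funext fun s => (hPψder s).deriv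
  have hP'c : Continuous (deriv P) := hP1.continuous_deriv le_rfl
  have hFTC : (∫ t in a..T, (deriv P t * ψ t + P t * deriv ψ t)) = P T := by
    have h1 : ∫ t in a..T, deriv (fun u => P u * ψ u) t = P T * ψ T - P a * ψ a :=
      intervalIntegral.integral_deriv_eq_sub
        (fun t _ => (hPdiff t).mul (hψd t))
        (by rw [hderPψ]
            exact ((hP'c.mul hψ1.continuous).add
              (hP1.continuous.mul hψ'c)).intervalIntegrable a T)
    rw [hderPψ] at h1
    rw [h1, hψa, hψone T hT'T.le]; ring
  have hIcc : ∀ t ∈ Set.uIcc a T, t ∈ Set.Icc a T := by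
    rw [Set.uIcc_of_le haT.le]; exact fun t ht => ht
  have hint2 : (∫ t in a..T, fderiv ℝ G (T, t) (1, 0))
      = κ * P T + deriv φ T
        * ∫ t in a..T, fderiv ℝ Lu (t, x t, deriv x t, φ T) (0, 0, 0, 1) := by
    have e1 : (∫ t in a..T, fderiv ℝ G (T, t) (1, 0))
        = (κ * ∫ t in a..T, (deriv P t * ψ t + P t * deriv ψ t))
          + deriv φ T * ∫ t in a..T, fderiv ℝ Lu (t, x t, deriv x t, φ T) (0, 0, 0, 1) := by
      rw [← intervalIntegral.integral_const_mul, ← intervalIntegral.integral_const_mul,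
        ← intervalIntegral.integral_add
          (f := fun t => κ * (deriv P t * ψ t + P t * deriv ψ t))
          (g := fun t => deriv φ T * fderiv ℝ Lu (t, x t, deriv x t, φ T) (0, 0, 0, 1))
          ((continuous_const.mul ((hP'c.mul hψ1.continuous).add
            (hP1.continuous.mul hψ'c))).intervalIntegrable a T)
          ((continuous_const.mul (hcont2 (0, 0, 0, 1))).intervalIntegrable a T)]
      apply intervalIntegral.integral_congr
      intro t ht
      simp only [hq]
      rw [hELP t (hIcc t ht)]
      simp only [hPdef]
      ring
    rw [e1, hFTC]
  have hGTT : G (T, T) = L T (x T) (deriv x T) (φ T) := hGT T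
  rw [hGTT, hint2] at hD0
  have hPT : deriv (fun v => L T (x T) v (φ T)) (deriv x T) = P T := by
    rw [hpd T, hPdef]
  rw [hPT]
  have hgoalint : (∫ t in a..T, deriv (fun w => L t (x t) (deriv x t) w) (φ T))
      = ∫ t in a..T, fderiv ℝ Lu (t, x t, deriv x t, φ T) (0, 0, 0, 1) :=
    intervalIntegral.integral_congr fun t _ => hp4 t
  rw [hgoalint]
  linarith [hD0]
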